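/- For every δ ∈ ℝ with δ ≠ −2, every t > 0 and every x ∈ ℝ³ with x ≠ 0, one has the exact identity ∫_{S²} (1 + |x + tω|²)^{δ/2} dσ(ω) = 8π (⟨u⟩^{2+δ} − ⟨v⟩^{2+δ}) / ((2+δ)(⟨u⟩² − ⟨v⟩²)), where u = t − |x| and v = t + |x|. -/

import Mathlib

open MeasureTheory Real Filter

noncomputable section

abbrev E3 : Type := EuclideanSpace ℝ (Fin 3)

/-- Japanese bracket `⟨s⟩ = (1 + s²)^{1/2}`. -/
def jap (s : ℝ) : ℝ := Real.sqrt (1 + s ^ 2)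

/-- The surface measure on the unit sphere `S² ⊂ ℝ³` (total mass `4π`). -/
def sphereM : Measure (Metric.sphere (0 : E3) 1) := (volume : Measure E3).toSphere

open Measure Set Metric intervalIntegral
open scoped RealInnerProductSpace

lemma sphereM_eq : sphereM = (volume : Measure E3).toSphere := rfl

section Aux

/-! ### Polar decomposition of the volume integral -/

lemma polar (F : E3 → ℝ) (hF : Integrable F) :
    ∫ y, F y = ∫ ω : Metric.sphere (0:E3) 1, (∫ r in Ioi (0:ℝ), r ^ 2 • F (r • (ω : E3))) ∂sphereM := by
  have h0 : MeasurableSet ({0}ᶜ : Set E3) := (measurableSet_singleton _).compl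
  have hmp := (volume : Measure E3).measurePreserving_homeomorphUnitSphereProd
  have hdim : Module.finrank ℝ E3 - 1 = 2 := by simp
  rw [hdim] at hmp
  rw [sphereM_eq]
  have hemb := (homeomorphUnitSphereProd E3).measurableEmbedding
  have hint : Integrable (fun p : (Metric.sphere (0:E3) 1 × Ioi (0:ℝ)) => F ((p.2 : ℝ) • (p.1 : E3)))
      ((volume : Measure E3).toSphere.prod (volumeIoiPow 2)) := by
    rw [← hmp.integrable_comp_emb hemb]
    have : (fun p : (Metric.sphere (0:E3) 1 × Ioi (0:ℝ)) => F ((p.2 : ℝ) • (p.1 : E3)))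
        ∘ (homeomorphUnitSphereProd E3) = fun y : ({0}ᶜ : Set E3) => F y := by
      funext y
      simp only [Function.comp_apply, homeomorphUnitSphereProd_apply_fst_coe,
        homeomorphUnitSphereProd_apply_snd_coe]
      rw [smul_inv_smul₀ (norm_ne_zero_iff.2 y.2)]
    rw [this]
    show Integrable (F ∘ Subtype.val) _
    rw [← (MeasurableEmbedding.subtype_coe h0).integrable_map_iff, map_comap_subtype_coe h0,
      restrict_compl_singleton]
    exact hF
  calc ∫ y, F y = ∫ y : ({0}ᶜ : Set E3), F y ∂((volume : Measure E3).comap (↑)) := by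
        rw [integral_subtype_comap h0, restrict_compl_singleton]
    _ = ∫ p : (Metric.sphere (0:E3) 1 × Ioi (0:ℝ)),
          F ((p.2 : ℝ) • (p.1 : E3)) ∂((volume : Measure E3).toSphere.prod (volumeIoiPow 2)) := by
        rw [← hmp.integral_comp hemb (fun p => F ((p.2 : ℝ) • (p.1 : E3)))]
        refine integral_congr_ae (Filter.Eventually.of_forall fun y => ?_)
        simp only [homeomorphUnitSphereProd_apply_fst_coe, homeomorphUnitSphereProd_apply_snd_coe]
        rw [smul_inv_smul₀ (norm_ne_zero_iff.2 y.2)]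
    _ = ∫ ω : Metric.sphere (0:E3) 1, (∫ r : Ioi (0:ℝ), F ((r:ℝ) • (ω : E3)) ∂(volumeIoiPow 2))
          ∂(volume : Measure E3).toSphere := integral_prod _ hint
    _ = _ := by
        refine integral_congr_ae (Filter.Eventually.of_forall fun ω => ?_)
        simp only [Measure.volumeIoiPow, ENNReal.ofReal]
        rw [integral_withDensity_eq_integral_smul (by fun_prop),
          integral_subtype_comap measurableSet_Ioi (fun r : ℝ => Real.toNNReal (r ^ 2) • F (r • (ω:E3)))]
        refine setIntegral_congr_fun measurableSet_Ioi fun r hr => ?_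
        rw [NNReal.smul_def, Real.coe_toNNReal _ (pow_nonneg hr.out.le _)]

/-! ### Area of a disk -/

lemma disk_vol (a : ℝ) :
    volume {w : Fin 2 → ℝ | ∑ j, w j ^ 2 < a} = ENNReal.ofReal π * ENNReal.ofReal a := by
  rcases le_or_gt a 0 with ha | ha
  · have h1 : {w : Fin 2 → ℝ | ∑ j, w j ^ 2 < a} = ∅ := by
      ext w
      simp only [mem_setOf_eq, mem_empty_iff_false, iff_false, not_lt]
      exact ha.trans (Finset.sum_nonneg fun j _ => sq_nonneg _)
    rw [h1]
    simp [ENNReal.ofReal_eq_zero.2 ha]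
  · have hmeas : MeasurableSet {w : Fin 2 → ℝ | ∑ j, w j ^ 2 < a} :=
      measurableSet_lt (by fun_prop) measurable_const
    have hmp := (show MeasurePreserving (MeasurableEquiv.toLp 2 (Fin 2 → ℝ)).symm volume volume from PiLp.volume_preserving_ofLp _)
    rw [← hmp.measure_preimage hmeas.nullMeasurableSet]
    have hpre : ((MeasurableEquiv.toLp 2 (Fin 2 → ℝ)).symm) ⁻¹' {w : Fin 2 → ℝ | ∑ j, w j ^ 2 < a}
        = ball (0 : EuclideanSpace ℝ (Fin 2)) (Real.sqrt a) := by
      ext z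
      simp only [mem_preimage, mem_setOf_eq, mem_ball, dist_zero_right]
      have hz : ∀ j, ((MeasurableEquiv.toLp 2 (Fin 2 → ℝ)).symm) z j = z j := fun j => rfl
      rw [EuclideanSpace.norm_eq, ← Real.sqrt_lt_sqrt_iff (Finset.sum_nonneg fun j _ => sq_nonneg _)]
      simp_rw [Real.norm_eq_abs, sq_abs]
      exact Iff.rfl
    rw [hpre, EuclideanSpace.volume_ball]
    have hc : Fintype.card (Fin 2) = 2 := by simp
    rw [hc]
    have h2 : ((2:ℕ):ℝ)/2 + 1 = 2 := by norm_num
    rw [h2, Real.Gamma_two, div_one, Real.sq_sqrt Real.pi_nonneg,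
      ← ENNReal.ofReal_pow (Real.sqrt_nonneg a), Real.sq_sqrt ha.le, mul_comm]

/-! ### The Cartesian computation -/

lemma cartesian (G : ℝ → ℝ) (e : E3) (he : ‖e‖ = 1)
    (hF : Integrable ((ball (0:E3) 1).indicator (fun y => G ⟪e, y⟫))) :
    ∫ y, (ball (0:E3) 1).indicator (fun y => G ⟪e, y⟫) y
      = π * ∫ z in (-1:ℝ)..1, G z * (1 - z ^ 2) := by
  obtain ⟨b, hb⟩ : ∃ b : OrthonormalBasis (Fin 3) ℝ E3, b 0 = e := by
    have hcard : Module.finrank ℝ E3 = Fintype.card (Fin 3) := by simp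
    have ho : Orthonormal ℝ (Set.restrict {0} (fun _ : Fin 3 => e)) := by
      constructor
      · intro i; exact he
      · intro i j hij
        exact absurd (Subtype.ext (i.2.trans j.2.symm)) hij
    obtain ⟨b, hb⟩ := ho.exists_orthonormalBasis_extension_of_card_eq hcard
    exact ⟨b, hb 0 rfl⟩
  set S3 : Set (Fin 3 → ℝ) := {w | ∑ i, w i ^ 2 < 1} with hS3
  set Sp : Set (ℝ × (Fin 2 → ℝ)) := {p | p.1 ^ 2 + ∑ j, p.2 j ^ 2 < 1} with hSp
  set g0 : E3 → ℝ := (ball (0:E3) 1).indicator (fun y => G ⟪e, y⟫) with hg0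
  set g1 : E3 → ℝ := (ball (0:E3) 1).indicator (fun z => G (z 0)) with hg1
  set g2 : (Fin 3 → ℝ) → ℝ := S3.indicator (fun w => G (w 0)) with hg2
  set g3 : ℝ × (Fin 2 → ℝ) → ℝ := Sp.indicator (fun p => G p.1) with hg3
  have heq1 : g1 = g0 ∘ (b.repr.symm) := by
    funext z
    have hmem : (b.repr.symm z ∈ ball (0:E3) 1) ↔ z ∈ ball (0 : EuclideanSpace ℝ (Fin 3)) 1 := by
      simp only [mem_ball_zero_iff, LinearIsometryEquiv.norm_map]
    have hval : ⟪e, b.repr.symm z⟫ = z 0 := by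
      rw [← hb, ← LinearIsometryEquiv.inner_map_map b.repr (b 0) (b.repr.symm z),
        LinearIsometryEquiv.apply_symm_apply, OrthonormalBasis.repr_self]
      simp [EuclideanSpace.inner_single_left]
    by_cases hz : z ∈ ball (0 : EuclideanSpace ℝ (Fin 3)) 1
    · rw [Function.comp_apply, hg0, hg1, Set.indicator_of_mem hz, Set.indicator_of_mem (hmem.2 hz),
        hval]
    · rw [Function.comp_apply, hg0, hg1, Set.indicator_of_notMem hz,
        Set.indicator_of_notMem (fun h => hz (hmem.1 h))]
  have heq2 : g2 = g1 ∘ ((MeasurableEquiv.toLp 2 (Fin 3 → ℝ)).symm).symm := by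
    funext w
    have hcoord : ∀ i, (((MeasurableEquiv.toLp 2 (Fin 3 → ℝ)).symm).symm w : E3) i = w i :=
      fun i => rfl
    have hmem : (((MeasurableEquiv.toLp 2 (Fin 3 → ℝ)).symm).symm w ∈ ball (0:E3) 1) ↔ w ∈ S3 := by
      rw [mem_ball_zero_iff, EuclideanSpace.norm_eq, hS3, mem_setOf_eq,
        show (1:ℝ) = Real.sqrt 1 from (Real.sqrt_one).symm,
        Real.sqrt_lt_sqrt_iff (Finset.sum_nonneg fun j _ => sq_nonneg _)]
      simp_rw [hcoord, Real.norm_eq_abs, sq_abs]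
      rw [Real.sqrt_one]
    by_cases hz : w ∈ S3
    · rw [Function.comp_apply, hg1, hg2, Set.indicator_of_mem hz,
        Set.indicator_of_mem (hmem.2 hz), hcoord]
    · rw [Function.comp_apply, hg1, hg2, Set.indicator_of_notMem hz,
        Set.indicator_of_notMem (fun h => hz (hmem.1 h))]
  have heq3 : g2 = g3 ∘ (MeasurableEquiv.piFinSuccAbove (fun _ : Fin 3 => ℝ) 0) := by
    funext w
    have happ : (MeasurableEquiv.piFinSuccAbove (fun _ : Fin 3 => ℝ) 0) w
        = (w 0, fun j => w ((0:Fin 3).succAbove j)) := rfl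
    have hsum : (w 0) ^ 2 + ∑ j, (w ((0:Fin 3).succAbove j)) ^ 2 = ∑ i, w i ^ 2 :=
      (Fin.sum_univ_succAbove (fun i => w i ^ 2) 0).symm
    have hmem : w ∈ S3 ↔ (MeasurableEquiv.piFinSuccAbove (fun _ : Fin 3 => ℝ) 0) w ∈ Sp := by
      rw [happ, hS3, hSp, mem_setOf_eq, mem_setOf_eq, hsum]
    by_cases hz : w ∈ S3
    · rw [Function.comp_apply, hg2, hg3, Set.indicator_of_mem hz,
        Set.indicator_of_mem (hmem.1 hz), happ]
    · rw [Function.comp_apply, hg2, hg3, Set.indicator_of_notMem hz,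
        Set.indicator_of_notMem (fun h => hz (hmem.2 h))]
  have hmp1 := (b.measurePreserving_repr_symm)
  have hmb1 : MeasurableEmbedding (b.repr.symm : EuclideanSpace ℝ (Fin 3) → E3) :=
    b.repr.symm.toHomeomorph.measurableEmbedding
  have hmp2 := ((show MeasurePreserving (MeasurableEquiv.toLp 2 (Fin 3 → ℝ)).symm volume volume from PiLp.volume_preserving_ofLp _)).symm
  have hmp3 := volume_preserving_piFinSuccAbove (fun _ : Fin 3 => ℝ) 0
  have hF1 : Integrable g1 := by
    rw [heq1]; exact (hmp1.integrable_comp_emb hmb1).2 hF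
  have hF2 : Integrable g2 := by
    rw [heq2]; exact (hmp2.integrable_comp_emb (MeasurableEquiv.measurableEmbedding _)).2 hF1
  have hF3 : Integrable g3 := by
    rw [← hmp3.integrable_comp_emb (MeasurableEquiv.measurableEmbedding _), ← heq3]; exact hF2
  have h1 : ∫ y, g0 y = ∫ z : EuclideanSpace ℝ (Fin 3), g1 z := by
    rw [heq1]; exact (hmp1.integral_comp hmb1 g0).symm
  have h2 : ∫ z : EuclideanSpace ℝ (Fin 3), g1 z = ∫ w : Fin 3 → ℝ, g2 w := by
    rw [heq2]; exact (hmp2.integral_comp (MeasurableEquiv.measurableEmbedding _) g1).symm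
  have h3 : ∫ w : Fin 3 → ℝ, g2 w = ∫ p : ℝ × (Fin 2 → ℝ), g3 p := by
    rw [heq3]; exact hmp3.integral_comp (MeasurableEquiv.measurableEmbedding _) g3
  have hF3' : Integrable g3 ((volume : Measure ℝ).prod (volume : Measure (Fin 2 → ℝ))) := by
    rwa [← volume_eq_prod]
  have h4 : ∫ p : ℝ × (Fin 2 → ℝ), g3 p = ∫ z : ℝ, ∫ w : Fin 2 → ℝ, g3 (z, w) := by
    rw [volume_eq_prod, integral_prod _ hF3']
  have hslice : ∀ z : ℝ, (∫ w : Fin 2 → ℝ, g3 (z, w))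
      = (Ioo (-1:ℝ) 1).indicator (fun z => π * (G z * (1 - z ^ 2))) z := by
    intro z
    have hms : MeasurableSet {w : Fin 2 → ℝ | ∑ j, w j ^ 2 < 1 - z ^ 2} :=
      measurableSet_lt (by fun_prop) measurable_const
    have hrw : (fun w : Fin 2 → ℝ => g3 (z, w))
        = ({w : Fin 2 → ℝ | ∑ j, w j ^ 2 < 1 - z ^ 2}).indicator (fun _ => G z) := by
      funext w
      have hcond : ((z, w) ∈ Sp) ↔ w ∈ {w : Fin 2 → ℝ | ∑ j, w j ^ 2 < 1 - z ^ 2} := by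
        rw [hSp, mem_setOf_eq, mem_setOf_eq]
        constructor <;> intro h <;> linarith
      by_cases hz : (z, w) ∈ Sp
      · rw [hg3, Set.indicator_of_mem hz, Set.indicator_of_mem (hcond.1 hz)]
      · rw [hg3, Set.indicator_of_notMem hz, Set.indicator_of_notMem (fun h => hz (hcond.2 h))]
    rw [hrw, integral_indicator_const _ hms, measureReal_def, disk_vol]
    by_cases hz : z ∈ Ioo (-1:ℝ) 1
    · have h1z : (0:ℝ) ≤ 1 - z ^ 2 := by nlinarith [hz.1, hz.2]
      rw [Set.indicator_of_mem hz, ENNReal.toReal_mul, ENNReal.toReal_ofReal Real.pi_nonneg,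
        ENNReal.toReal_ofReal h1z, smul_eq_mul]
      ring
    · have h1z : 1 - z ^ 2 ≤ 0 := by
        rw [mem_Ioo, not_and_or, not_lt, not_lt] at hz
        rcases hz with h | h <;> nlinarith
      rw [Set.indicator_of_notMem hz, ENNReal.ofReal_eq_zero.2 h1z, mul_zero,
        ENNReal.toReal_zero, zero_smul]
  rw [h1, h2, h3, h4]
  calc ∫ z : ℝ, ∫ w : Fin 2 → ℝ, g3 (z, w)
      = ∫ z : ℝ, (Ioo (-1:ℝ) 1).indicator (fun z => π * (G z * (1 - z ^ 2))) z :=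
        integral_congr_ae (.of_forall hslice)
    _ = ∫ z in Ioo (-1:ℝ) 1, π * (G z * (1 - z ^ 2)) := integral_indicator measurableSet_Ioo
    _ = ∫ z in Set.Ioc (-1:ℝ) 1, π * (G z * (1 - z ^ 2)) := (integral_Ioc_eq_integral_Ioo).symm
    _ = ∫ z in (-1:ℝ)..1, π * (G z * (1 - z ^ 2)) :=
        (intervalIntegral.integral_of_le (by norm_num)).symm
    _ = π * ∫ z in (-1:ℝ)..1, G z * (1 - z ^ 2) := intervalIntegral.integral_const_mul π _

/-! ### Elementary calculus -/

lemma hasDerivAt_aff_rpow (c b p : ℝ) {x : ℝ} (h : c + b * x ≠ 0) :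
    HasDerivAt (fun s => (c + b * s) ^ p) (p * (c + b * x) ^ (p - 1) * b) x := by
  have h1 : HasDerivAt (fun s : ℝ => c + b * s) b x := by
    simpa using ((hasDerivAt_id x).const_mul b).const_add c
  exact (Real.hasDerivAt_rpow_const (p := p) (Or.inl h)).comp x h1

lemma contOn_aff_rpow (c b p : ℝ) {S : Set ℝ} (h : ∀ x ∈ S, c + b * x ≠ 0) :
    ContinuousOn (fun s => (c + b * s) ^ p) S :=
  ContinuousOn.rpow_const (by fun_prop) fun x hx => Or.inl (h x hx)

lemma aff_pos {c b : ℝ} (hb : 0 < b) (hcb : b < c) {x : ℝ} (hx : |x| ≤ 1) : 0 < c + b * x := by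
  have h1 : |b * x| ≤ b := by
    rw [abs_mul, abs_of_pos hb]
    nlinarith [abs_nonneg x]
  have h2 := abs_le.1 h1
  linarith [h2.1]

lemma ftc_r {c b p : ℝ} (hb : 0 < b) (hcb : b < c) {s : ℝ} (hs : |s| ≤ 1) :
    ∫ r in (0:ℝ)..1,
        r ^ 2 * (3 * (c + b * (r * s)) ^ p + (r * s) * (b * p * (c + b * (r * s)) ^ (p - 1)))
      = (c + b * s) ^ p := by
  have hrs : ∀ r ∈ Set.uIcc (0:ℝ) 1, |r * s| ≤ 1 := by
    intro r hr
    rw [Set.uIcc_of_le (by norm_num)] at hr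
    rw [abs_mul]
    have h1 : |r| ≤ 1 := abs_le.2 ⟨by linarith [hr.1], hr.2⟩
    nlinarith [abs_nonneg r, abs_nonneg s]
  have hne : ∀ r ∈ Set.uIcc (0:ℝ) 1, c + b * (r * s) ≠ 0 :=
    fun r hr => (aff_pos hb hcb (hrs r hr)).ne'
  have key : ∀ r ∈ Set.uIcc (0:ℝ) 1,
      HasDerivAt (fun r : ℝ => r ^ 3 * (c + b * (r * s)) ^ p)
        (r ^ 2 * (3 * (c + b * (r * s)) ^ p + (r * s) * (b * p * (c + b * (r * s)) ^ (p - 1))))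
        r := by
    intro r hr
    have hg : HasDerivAt (fun u : ℝ => (c + b * (u * s)) ^ p)
        ((p * (c + b * (r * s)) ^ (p - 1) * b) * s) r := by
      have := (hasDerivAt_aff_rpow c b p (hne r hr)).comp r ((hasDerivAt_id r).mul_const s)
      exact this.congr_deriv (by simp)
    have hr3 : HasDerivAt (fun u : ℝ => u ^ 3) (3 * r ^ 2) r := by
      simpa using hasDerivAt_pow 3 r
    have := hr3.mul hg
    refine this.congr_deriv ?_
    ring
  have c1 : ContinuousOn (fun r : ℝ => (c + b * (r * s)) ^ p) (Set.uIcc (0:ℝ) 1) :=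
    (contOn_aff_rpow c b p (S := (fun r : ℝ => r * s) '' (Set.uIcc 0 1))
      (fun x hx => by obtain ⟨r, hr, rfl⟩ := hx; exact hne r hr)).comp
      (Continuous.continuousOn (by fun_prop)) (mapsTo_image _ _)
  have c2 : ContinuousOn (fun r : ℝ => (c + b * (r * s)) ^ (p - 1)) (Set.uIcc (0:ℝ) 1) :=
    (contOn_aff_rpow c b (p - 1) (S := (fun r : ℝ => r * s) '' (Set.uIcc 0 1))
      (fun x hx => by obtain ⟨r, hr, rfl⟩ := hx; exact hne r hr)).comp
      (Continuous.continuousOn (by fun_prop)) (mapsTo_image _ _)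
  have hcont : ContinuousOn (fun r : ℝ =>
      r ^ 2 * (3 * (c + b * (r * s)) ^ p + (r * s) * (b * p * (c + b * (r * s)) ^ (p - 1))))
      (Set.uIcc (0:ℝ) 1) :=
    ((continuous_pow 2).continuousOn).mul
      ((continuousOn_const.mul c1).add
        ((Continuous.continuousOn (by fun_prop : Continuous fun r : ℝ => r * s)).mul
          (continuousOn_const.mul c2)))
  rw [integral_eq_sub_of_hasDerivAt key hcont.intervalIntegrable]
  norm_num

lemma ftc_G {c b p : ℝ} (hb : 0 < b) (hcb : b < c) :
    ∫ z in (-1:ℝ)..1,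
        (3 * (c + b * z) ^ p + z * (b * p * (c + b * z) ^ (p - 1))) * (1 - z ^ 2)
      = 2 * ∫ z in (-1:ℝ)..1, (c + b * z) ^ p := by
  have hne : ∀ z ∈ Set.uIcc (-1:ℝ) 1, c + b * z ≠ 0 := by
    intro z hz
    rw [Set.uIcc_of_le (by norm_num)] at hz
    exact (aff_pos hb hcb (abs_le.2 hz)).ne'
  have hcg : ContinuousOn (fun z : ℝ => (c + b * z) ^ p) (Set.uIcc (-1:ℝ) 1) :=
    contOn_aff_rpow c b p hne
  have hcg' : ContinuousOn (fun z : ℝ => (c + b * z) ^ (p - 1)) (Set.uIcc (-1:ℝ) 1) :=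
    contOn_aff_rpow c b (p - 1) hne
  have key : ∀ z ∈ Set.uIcc (-1:ℝ) 1,
      HasDerivAt (fun z : ℝ => z * (1 - z ^ 2) * (c + b * z) ^ p)
        ((3 * (c + b * z) ^ p + z * (b * p * (c + b * z) ^ (p - 1))) * (1 - z ^ 2)
          - 2 * (c + b * z) ^ p) z := by
    intro z hz
    have h1 : HasDerivAt (fun z : ℝ => z * (1 - z ^ 2)) (1 - 3 * z ^ 2) z := by
      have h0 : HasDerivAt (fun z : ℝ => z * (1 - z ^ 2)) (1 * (1 - z ^ 2) + z * (0 - 2 * z)) z :=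
        (hasDerivAt_id z).mul ((hasDerivAt_const z 1).sub (by simpa using hasDerivAt_pow 2 z))
      convert h0 using 1
      ring
    have h2 := h1.mul (hasDerivAt_aff_rpow c b p (hne z hz))
    refine h2.congr_deriv ?_
    ring
  have hGcont : ContinuousOn (fun z : ℝ =>
      (3 * (c + b * z) ^ p + z * (b * p * (c + b * z) ^ (p - 1))) * (1 - z ^ 2))
      (Set.uIcc (-1:ℝ) 1) :=
    ((continuousOn_const.mul hcg).add
      (continuousOn_id.mul (continuousOn_const.mul hcg'))).mul (by fun_prop)
  have hcont : ContinuousOn (fun z : ℝ =>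
      (3 * (c + b * z) ^ p + z * (b * p * (c + b * z) ^ (p - 1))) * (1 - z ^ 2)
        - 2 * (c + b * z) ^ p) (Set.uIcc (-1:ℝ) 1) :=
    hGcont.sub (continuousOn_const.mul hcg)
  have h3 := integral_eq_sub_of_hasDerivAt key hcont.intervalIntegrable
  have h4 : (fun z : ℝ => z * (1 - z ^ 2) * (c + b * z) ^ p) 1
      - (fun z : ℝ => z * (1 - z ^ 2) * (c + b * z) ^ p) (-1) = 0 := by norm_num
  rw [h4] at h3
  have h5 : IntervalIntegrable (fun z : ℝ =>
      (3 * (c + b * z) ^ p + z * (b * p * (c + b * z) ^ (p - 1))) * (1 - z ^ 2))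
      volume (-1) 1 := hGcont.intervalIntegrable
  have h6 : IntervalIntegrable (fun z : ℝ => 2 * (c + b * z) ^ p) volume (-1) 1 :=
    (continuousOn_const.mul hcg).intervalIntegrable
  have h7 := (integral_sub h5 h6).symm.trans h3
  rw [intervalIntegral.integral_const_mul] at h7
  linarith [h7]

lemma ftc_g {c b p : ℝ} (hb : 0 < b) (hcb : b < c) (hp : p + 1 ≠ 0) :
    ∫ z in (-1:ℝ)..1, (c + b * z) ^ p
      = ((c + b) ^ (p + 1) - (c - b) ^ (p + 1)) / (b * (p + 1)) := by
  have hne : ∀ z ∈ Set.uIcc (-1:ℝ) 1, c + b * z ≠ 0 := by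
    intro z hz
    rw [Set.uIcc_of_le (by norm_num)] at hz
    exact (aff_pos hb hcb (abs_le.2 hz)).ne'
  have key : ∀ z ∈ Set.uIcc (-1:ℝ) 1,
      HasDerivAt (fun z : ℝ => (c + b * z) ^ (p + 1) / (b * (p + 1)))
        ((c + b * z) ^ p) z := by
    intro z hz
    have h1 := (hasDerivAt_aff_rpow c b (p + 1) (hne z hz)).div_const (b * (p + 1))
    refine h1.congr_deriv ?_
    rw [add_sub_cancel_right]
    field_simp
  have hcont : ContinuousOn (fun z : ℝ => (c + b * z) ^ p) (Set.uIcc (-1:ℝ) 1) :=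
    contOn_aff_rpow c b p hne
  rw [integral_eq_sub_of_hasDerivAt key hcont.intervalIntegrable]
  have e1 : c + b * (1:ℝ) = c + b := by ring
  have e2 : c + b * (-1:ℝ) = c - b := by ring
  rw [e1, e2, div_sub_div_same]

/-! ### The sphere slice computation -/

lemma sphere_slice {c b p : ℝ} (hb : 0 < b) (hcb : b < c) (e : E3) (he : ‖e‖ = 1) :
    ∫ ω : Metric.sphere (0:E3) 1, (c + b * ⟪e, (ω : E3)⟫) ^ p ∂sphereM
      = 2 * π * ∫ s in (-1:ℝ)..1, (c + b * s) ^ p := by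
  set Gf : ℝ → ℝ := fun z => 3 * (c + b * z) ^ p + z * (b * p * (c + b * z) ^ (p - 1)) with hGf
  set g0 : E3 → ℝ := (ball (0:E3) 1).indicator (fun y => Gf ⟪e, y⟫) with hg0
  have hF : Integrable g0 := by
    rw [hg0, integrable_indicator_iff measurableSet_ball]
    have hIcc : ∀ z ∈ Set.Icc (-1:ℝ) 1, c + b * z ≠ 0 :=
      fun z hz => (aff_pos hb hcb (abs_le.2 ⟨hz.1, hz.2⟩)).ne'
    have hGc : ContinuousOn Gf (Set.Icc (-1:ℝ) 1) :=
      (continuousOn_const.mul (contOn_aff_rpow c b p hIcc)).add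
        (continuousOn_id.mul (continuousOn_const.mul (contOn_aff_rpow c b (p-1) hIcc)))
    have hic : Continuous (fun y : E3 => ⟪e, y⟫) := Continuous.inner continuous_const continuous_id
    have hmap : MapsTo (fun y : E3 => ⟪e, y⟫) (closedBall (0:E3) 1) (Set.Icc (-1:ℝ) 1) := by
      intro y hy
      rw [mem_closedBall_zero_iff] at hy
      refine abs_le.1 ?_
      calc |⟪e, y⟫| ≤ ‖e‖ * ‖y‖ := abs_real_inner_le_norm e y
        _ ≤ 1 := by rw [he, one_mul]; exact hy
    have hcont : ContinuousOn (fun y : E3 => Gf ⟪e, y⟫) (closedBall (0:E3) 1) :=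
      hGc.comp hic.continuousOn hmap
    exact (hcont.integrableOn_compact (isCompact_closedBall _ _)).mono_set ball_subset_closedBall
  have hinner : ∀ ω : Metric.sphere (0:E3) 1,
      (∫ r in Ioi (0:ℝ), r ^ 2 • g0 (r • (ω : E3))) = (c + b * ⟪e, (ω:E3)⟫) ^ p := by
    intro ω
    have hω : ‖(ω:E3)‖ = 1 := mem_sphere_zero_iff_norm.1 ω.2
    have hs1 : |⟪e, (ω:E3)⟫| ≤ 1 := by
      calc |⟪e, (ω:E3)⟫| ≤ ‖e‖ * ‖(ω:E3)‖ := abs_real_inner_le_norm _ _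
        _ = 1 := by rw [he, hω, one_mul]
    set s : ℝ := ⟪e, (ω:E3)⟫ with hsdef
    have heqf : Set.EqOn (fun r : ℝ => r ^ 2 • g0 (r • (ω:E3)))
        ((Ioo (0:ℝ) 1).indicator (fun r => r ^ 2 *
          (3 * (c + b * (r * s)) ^ p + (r * s) * (b * p * (c + b * (r * s)) ^ (p - 1)))))
        (Ioi 0) := by
      intro r hr
      beta_reduce
      rw [mem_Ioi] at hr
      have hnorm : ‖r • (ω:E3)‖ = r := by
        rw [norm_smul, hω, mul_one, Real.norm_eq_abs, abs_of_pos hr]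
      have hinner2 : ⟪e, r • (ω:E3)⟫ = r * s := real_inner_smul_right e _ r
      by_cases h1 : r < 1
      · have hmem : r • (ω:E3) ∈ ball (0:E3) 1 := by
          rw [mem_ball_zero_iff, hnorm]; exact h1
        rw [Set.indicator_of_mem (mem_Ioo.2 ⟨hr, h1⟩), hg0, Set.indicator_of_mem hmem, hGf]
        simp only [hinner2, smul_eq_mul]
      · have hmem : r • (ω:E3) ∉ ball (0:E3) 1 := by
          rw [mem_ball_zero_iff, hnorm]; exact h1
        rw [Set.indicator_of_notMem (by rw [mem_Ioo]; exact fun hh => h1 hh.2), hg0,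
          Set.indicator_of_notMem hmem, smul_zero]
    rw [setIntegral_congr_fun measurableSet_Ioi heqf, setIntegral_indicator measurableSet_Ioo,
      Set.inter_eq_right.2 Set.Ioo_subset_Ioi_self, ← integral_Ioc_eq_integral_Ioo,
      ← intervalIntegral.integral_of_le (by norm_num : (0:ℝ) ≤ 1)]
    exact ftc_r hb hcb hs1
  have hpolar := polar g0 hF
  have hcart := cartesian Gf e he hF
  have hsphere : (∫ ω : Metric.sphere (0:E3) 1,
      (∫ r in Ioi (0:ℝ), r ^ 2 • g0 (r • (ω : E3))) ∂sphereM)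
      = ∫ ω : Metric.sphere (0:E3) 1, (c + b * ⟪e, (ω:E3)⟫) ^ p ∂sphereM :=
    integral_congr_ae (.of_forall hinner)
  have hGfint : (∫ z in (-1:ℝ)..1, Gf z * (1 - z ^ 2))
      = 2 * ∫ z in (-1:ℝ)..1, (c + b * z) ^ p := ftc_G hb hcb
  rw [← hsphere, ← hpolar, hcart, hGfint]
  ring

end Aux

theorem stmt1 (δ : ℝ) (hδ : δ ≠ -2) (t : ℝ) (ht : 0 < t) (x : E3) (hx : x ≠ 0) :
    (∫ ω : Metric.sphere (0 : E3) 1, ((1 : ℝ) + ‖x + t • (ω : E3)‖ ^ 2) ^ (δ / 2) ∂sphereM)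
      = 8 * Real.pi * (jap (t - ‖x‖) ^ (2 + δ) - jap (t + ‖x‖) ^ (2 + δ)) /
          ((2 + δ) * (jap (t - ‖x‖) ^ 2 - jap (t + ‖x‖) ^ 2)) := by
  have hr : 0 < ‖x‖ := norm_pos_iff.2 hx
  set r : ℝ := ‖x‖ with hrdef
  set e : E3 := ‖x‖⁻¹ • x with hedef
  have he : ‖e‖ = 1 := by
    rw [hedef, norm_smul, norm_inv, norm_norm, inv_mul_cancel₀ hr.ne']
  set c : ℝ := 1 + t ^ 2 + r ^ 2 with hcdef
  set b : ℝ := 2 * t * r with hbdef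
  have hb : 0 < b := by rw [hbdef]; positivity
  have hcb : b < c := by rw [hbdef, hcdef]; nlinarith [sq_nonneg (t - r)]
  have hp1 : δ / 2 + 1 ≠ 0 := by
    intro h
    exact hδ (by linarith)
  have hintegrand : ∀ ω : Metric.sphere (0:E3) 1,
      ((1 : ℝ) + ‖x + t • (ω : E3)‖ ^ 2) ^ (δ / 2) = (c + b * ⟪e, (ω:E3)⟫) ^ (δ / 2) := by
    intro ω
    have hω : ‖(ω:E3)‖ = 1 := mem_sphere_zero_iff_norm.1 ω.2
    have hx' : x = r • e := by
      rw [hedef, smul_smul, hrdef, mul_inv_cancel₀ hr.ne', one_smul]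
    congr 1
    have hns : ‖x + t • (ω:E3)‖ ^ 2
        = ‖x‖ ^ 2 + 2 * ⟪x, t • (ω:E3)⟫ + ‖t • (ω:E3)‖ ^ 2 := norm_add_sq_real x _
    have hi1 : ⟪x, t • (ω:E3)⟫ = t * (r * ⟪e, (ω:E3)⟫) := by
      rw [real_inner_smul_right, hx', real_inner_smul_left]
    have hn2 : ‖t • (ω:E3)‖ ^ 2 = t ^ 2 := by
      rw [norm_smul, hω, mul_one, Real.norm_eq_abs, sq_abs]
    rw [hns, hi1, hn2, ← hrdef, hcdef, hbdef]
    ring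
  rw [integral_congr_ae (.of_forall hintegrand), sphere_slice hb hcb e he,
    ftc_g hb hcb hp1]
  have hcbv : c + b = 1 + (t + r) ^ 2 := by rw [hcdef, hbdef]; ring
  have hcbu : c - b = 1 + (t - r) ^ 2 := by rw [hcdef, hbdef]; ring
  have hjap2 : ∀ s : ℝ, jap s ^ 2 = 1 + s ^ 2 :=
    fun s => Real.sq_sqrt (by positivity)
  have hjapp : ∀ s : ℝ, jap s ^ (2 + δ) = (1 + s ^ 2) ^ (δ / 2 + 1) := by
    intro s
    rw [jap, Real.sqrt_eq_rpow, ← Real.rpow_mul (by positivity : (0:ℝ) ≤ 1 + s ^ 2)]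
    congr 1
    ring
  rw [hjapp, hjapp, hjap2, hjap2, ← hcbu, ← hcbv]
  have hd : (c - b) - (c + b) = -(2 * b) := by ring
  have h2δ : 2 + δ = 2 * (δ / 2 + 1) := by ring
  rw [hd, h2δ]
  have hbne : b ≠ 0 := hb.ne'
  set q : ℝ := δ / 2 + 1 with hq
  set X : ℝ := (c + b) ^ q with hX
  set Y : ℝ := (c - b) ^ q with hY
  field_simp
  ring
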